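/- arXiv:2003.09174 — 2 statements merged into one kernel-verified Lean document; each statement's English description precedes it below -/
import Mathlib

section
/- Let A, G be symmetric positive definite n×n matrices with A ⪯ G ⪯ η A for some η ≥ 1. For any u and nonzero direction, define the DFP update G⁺ = DFP(A,G,u). Then DFP(A,G,u) ⪯ η A - (η-1)(A u uᵀ A)/(uᵀ A u), and in particular DFP(A,G,u) ⪯ η A. -/
open Matrix

noncomputable def DFPupd {n : ℕ} (A G : Matrix (Fin n) (Fin n) ℝ) (u : Fin n → ℝ) :
    Matrix (Fin n) (Fin n) ℝ :=
  G - ((u ⬝ᵥ A.mulVec u)⁻¹) •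
      (vecMulVec (A.mulVec u) (G.mulVec u) + vecMulVec (G.mulVec u) (A.mulVec u))
    + (((u ⬝ᵥ G.mulVec u) / (u ⬝ᵥ A.mulVec u) + 1) * (u ⬝ᵥ A.mulVec u)⁻¹) •
      vecMulVec (A.mulVec u) (A.mulVec u)

noncomputable def BFGSupd {n : ℕ} (A G : Matrix (Fin n) (Fin n) ℝ) (u : Fin n → ℝ) :
    Matrix (Fin n) (Fin n) ℝ :=
  G - ((u ⬝ᵥ G.mulVec u)⁻¹) • vecMulVec (G.mulVec u) (G.mulVec u)
    + ((u ⬝ᵥ A.mulVec u)⁻¹) • vecMulVec (A.mulVec u) (A.mulVec u)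

noncomputable def Broyd {n : ℕ} (φ : ℝ) (A G : Matrix (Fin n) (Fin n) ℝ) (u : Fin n → ℝ) :
    Matrix (Fin n) (Fin n) ℝ :=
  if u = 0 then G else φ • DFPupd A G u + (1 - φ) • BFGSupd A G u

/-- Closeness measure θ(A, G, u). -/
noncomputable def theta {n : ℕ} (A G : Matrix (Fin n) (Fin n) ℝ) (u : Fin n → ℝ) : ℝ :=
  if u = 0 then 0 else
    Real.sqrt ((u ⬝ᵥ ((G - A) * A⁻¹ * (G - A)).mulVec u) /
      (u ⬝ᵥ (G * A⁻¹ * G).mulVec u))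

/-- Trace potential σ(A, G). -/
noncomputable def sigmaPot {n : ℕ} (A G : Matrix (Fin n) (Fin n) ℝ) : ℝ :=
  (A⁻¹ * (G - A)).trace

/-- Byrd–Nocedal potential ψ(A, G). -/
noncomputable def psiPot {n : ℕ} (A G : Matrix (Fin n) (Fin n) ℝ) : ℝ :=
  (A⁻¹ * (G - A)).trace - Real.log (A⁻¹ * G).det

noncomputable def omegaFn (t : ℝ) : ℝ := t - Real.log (1 + t)

lemma vmv_mulVec {n : ℕ} (a b x : Fin n → ℝ) :
    (vecMulVec a b) *ᵥ x = (b ⬝ᵥ x) • a := by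
  ext i
  simp [mulVec, vecMulVec_apply, dotProduct, Finset.mul_sum, mul_comm, mul_assoc, mul_left_comm]

lemma herm_smul {n : ℕ} (c : ℝ) {M : Matrix (Fin n) (Fin n) ℝ} (h : M.IsHermitian) :
    (c • M).IsHermitian := by
  have hT : Mᵀ = M := by rw [← conjTranspose_eq_transpose_of_trivial]; exact h
  simp [Matrix.IsHermitian, conjTranspose_smul, hT]

lemma vmv_herm {n : ℕ} (a : Fin n → ℝ) : (vecMulVec a a).IsHermitian := by
  ext i j; simp [vecMulVec_apply, mul_comm, IsHermitian]

lemma vmv_herm2 {n : ℕ} (a b : Fin n → ℝ) :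
    (vecMulVec a b + vecMulVec b a).IsHermitian := by
  ext i j; simp [vecMulVec_apply, mul_comm, IsHermitian]; ring

lemma herm_dot {n : ℕ} {A : Matrix (Fin n) (Fin n) ℝ} (hA : A.IsHermitian)
    (v w : Fin n → ℝ) : v ⬝ᵥ A *ᵥ w = w ⬝ᵥ A *ᵥ v := by
  have hT : Aᵀ = A := by
    rw [← conjTranspose_eq_transpose_of_trivial]; exact hA
  rw [dotProduct_mulVec, ← mulVec_transpose, hT]
  exact dotProduct_comm _ _

theorem dfp_upper_bound {n : ℕ} (A G : Matrix (Fin n) (Fin n) ℝ)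
    (hA : A.PosDef) (hG : G.PosDef) (η : ℝ) (hη : 1 ≤ η)
    (hlow : (G - A).PosSemidef) (hup : (η • A - G).PosSemidef)
    (u : Fin n → ℝ) (hu : u ≠ 0) :
    ((η • A - ((η - 1) * (u ⬝ᵥ A.mulVec u)⁻¹) • vecMulVec (A.mulVec u) (A.mulVec u))
        - DFPupd A G u).PosSemidef ∧
      (η • A - DFPupd A G u).PosSemidef := by
  set s : ℝ := u ⬝ᵥ A.mulVec u with hs
  have hspos : 0 < s := by simpa using hA.dotProduct_mulVec_pos hu
  have hsne : s ≠ 0 := ne_of_gt hspos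
  have hAH : A.IsHermitian := hA.1
  have hGH : G.IsHermitian := hG.1
  -- Hermitian of DFP
  have hDFPH : (DFPupd A G u).IsHermitian := by
    unfold DFPupd
    exact ((hGH.sub (herm_smul _ (vmv_herm2 (A *ᵥ u) (G *ᵥ u)))).add (herm_smul _ (vmv_herm (A *ᵥ u))))
  have key : ∀ x : Fin n → ℝ, 0 ≤ x ⬝ᵥ
      ((η • A - ((η - 1) * s⁻¹) • vecMulVec (A *ᵥ u) (A *ᵥ u)) - DFPupd A G u) *ᵥ x := by
    intro x
    set p : ℝ := u ⬝ᵥ A *ᵥ x with hp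
    set y : Fin n → ℝ := x - (p / s) • u with hy
    have h0 := hup.dotProduct_mulVec_nonneg y
    simp only [star_trivial] at h0
    have hAxu : x ⬝ᵥ A *ᵥ u = p := herm_dot hAH x u
    have hAux : (A *ᵥ u) ⬝ᵥ x = p := by rw [dotProduct_comm]; exact hAxu
    set q : ℝ := u ⬝ᵥ G *ᵥ x with hq
    have hGxu : x ⬝ᵥ G *ᵥ u = q := herm_dot hGH x u
    have hGux : (G *ᵥ u) ⬝ᵥ x = q := by rw [dotProduct_comm]; exact hGxu
    set g : ℝ := u ⬝ᵥ G *ᵥ u with hg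
    have expand : y ⬝ᵥ (η • A - G) *ᵥ y =
        η * (x ⬝ᵥ A *ᵥ x) - η * p^2 / s - (x ⬝ᵥ G *ᵥ x) + 2 * p * q / s - g * p^2 / s^2 := by
      rw [hy]
      simp only [sub_mulVec, mulVec_sub, mulVec_smul, smul_mulVec,
        dotProduct_sub, sub_dotProduct, dotProduct_smul, smul_dotProduct, smul_eq_mul,
        smul_smul]
      rw [hAxu, hGxu, ← hp, ← hq, ← hs, ← hg]
      field_simp
      ring
    have lhsval : x ⬝ᵥ
        ((η • A - ((η - 1) * s⁻¹) • vecMulVec (A *ᵥ u) (A *ᵥ u)) - DFPupd A G u) *ᵥ x =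
        η * (x ⬝ᵥ A *ᵥ x) - η * p^2 / s - (x ⬝ᵥ G *ᵥ x) + 2 * p * q / s - g * p^2 / s^2 := by
      unfold DFPupd
      simp only [sub_mulVec, add_mulVec, mulVec_smul, smul_mulVec, vmv_mulVec,
        dotProduct_sub, dotProduct_add, sub_dotProduct, add_dotProduct, dotProduct_smul,
        smul_dotProduct, smul_eq_mul, smul_smul, ← hs, ← hg]
      rw [hAux, hGux, hAxu, hGxu]
      field_simp
      ring
    rw [lhsval, ← expand]; exact h0
  have part1 : ((η • A - ((η - 1) * s⁻¹) • vecMulVec (A *ᵥ u) (A *ᵥ u))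
      - DFPupd A G u).PosSemidef := by
    refine .of_dotProduct_mulVec_nonneg (((herm_smul η hAH).sub (herm_smul _ (vmv_herm (A *ᵥ u)))).sub hDFPH) fun x => ?_
    simpa using key x
  refine ⟨part1, ?_⟩
  have hc : 0 ≤ (η - 1) * s⁻¹ := mul_nonneg (by linarith) (le_of_lt (inv_pos.2 hspos))
  have part2 : (((η - 1) * s⁻¹) • vecMulVec (A *ᵥ u) (A *ᵥ u)).PosSemidef := by
    refine .of_dotProduct_mulVec_nonneg (herm_smul _ (vmv_herm (A *ᵥ u))) fun x => ?_
    simp only [star_trivial, smul_mulVec, vmv_mulVec, dotProduct_smul, smul_eq_mul,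
      smul_smul]
    rw [dotProduct_comm x (A *ᵥ u)]
    have : (η - 1) * s⁻¹ * (A *ᵥ u) ⬝ᵥ x * (A *ᵥ u) ⬝ᵥ x
        = ((η - 1) * s⁻¹) * ((A *ᵥ u) ⬝ᵥ x)^2 := by ring
    rw [this]
    exact mul_nonneg hc (sq_nonneg _)
  have := part1.add part2
  have e : ((η • A - ((η - 1) * s⁻¹) • vecMulVec (A *ᵥ u) (A *ᵥ u)) - DFPupd A G u)
      + ((η - 1) * s⁻¹) • vecMulVec (A *ᵥ u) (A *ᵥ u) = η • A - DFPupd A G u := by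
    abel
  rwa [e] at this
end

section
/- Let A, G be symmetric positive definite n×n matrices with (1/ξ)A ⪯ G ⪯ η A for some ξ, η ≥ 1, let φ ∈ [0,1] and u any vector. Define ψ(A,G) = tr(A⁻¹(G-A)) - ln det(A⁻¹G), θ(A,G,u) = [uᵀ(G-A)A⁻¹(G-A)u / (uᵀ G A⁻¹ G u)]^{1/2} (θ=0 for u=0), and ω(t) = t - ln(1+t). Then ψ(A,G) - ψ(A, Broyd_φ(A,G,u)) ≥ φ·ω(θ(A,G,u)/(ξ^{3/2}√η)) + (1-φ)·ω(θ(A,G,u)/ξ). -/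
open Matrix

lemma log_ge_one_sub_inv {x : ℝ} (hx : 0 < x) : 1 - x⁻¹ ≤ Real.log x := by
  have h := Real.log_le_sub_one_of_pos (x := x⁻¹) (by positivity)
  rw [Real.log_inv] at h
  linarith

lemma omegaFn_nonneg {t : ℝ} (ht : -1 < t) : 0 ≤ omegaFn t := by
  have := Real.log_le_sub_one_of_pos (x := 1 + t) (by linarith)
  simp only [omegaFn]; linarith

lemma omegaFn_mono {s t : ℝ} (hs : 0 ≤ s) (hst : s ≤ t) : omegaFn s ≤ omegaFn t := by
  have h1s : (0:ℝ) < 1 + s := by linarith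
  have h1t : (0:ℝ) < 1 + t := by linarith
  have h := Real.log_le_sub_one_of_pos (x := (1+t)/(1+s)) (by positivity)
  rw [Real.log_div (by positivity) (by positivity)] at h
  have h2 : (1+t)/(1+s) - 1 = (t - s)/(1+s) := by field_simp; ring
  have h3 : (t - s)/(1+s) ≤ t - s := by
    rw [div_le_iff₀ h1s]; nlinarith
  simp only [omegaFn]; linarith

lemma two_mul_le_log_sub {d : ℝ} (h0 : 0 ≤ d) (h1 : d < 1) :
    2*d ≤ Real.log (1+d) - Real.log (1-d) := by
  set f : ℝ → ℝ := fun x => Real.log (1+x) - Real.log (1-x) - 2*x with hf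
  have hder : ∀ x ∈ Set.Ioo (-1 : ℝ) 1, HasDerivAt f (1/(1+x) - (-1)/(1-x) - 2) x := by
    intro x hx
    have hx1 : (1:ℝ) + x ≠ 0 := by rcases hx with ⟨h,_⟩; intro hc; linarith [hc]
    have hx2 : (1:ℝ) - x ≠ 0 := by rcases hx with ⟨_,h⟩; intro hc; linarith [hc]
    have d1 : HasDerivAt (fun x : ℝ => 1 + x) 1 x := by
      simpa using (hasDerivAt_id x).const_add 1
    have d2 : HasDerivAt (fun x : ℝ => 1 - x) (-1) x := by
      exact (hasDerivAt_id' x).const_sub 1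
    have l1 : HasDerivAt (fun x : ℝ => Real.log (1+x)) (1/(1+x)) x := d1.log hx1
    have l2 : HasDerivAt (fun x : ℝ => Real.log (1-x)) ((-1)/(1-x)) x := d2.log hx2
    have l3 : HasDerivAt (fun x : ℝ => 2*x) 2 x := by
      simpa using (hasDerivAt_id x).const_mul 2
    exact (l1.sub l2).sub l3
  have hmono : MonotoneOn f (Set.Icc 0 d) := by
    have hsub : Set.Icc (0:ℝ) d ⊆ Set.Ioo (-1:ℝ) 1 := by
      intro x hx; exact ⟨by linarith [hx.1], by linarith [hx.2]⟩
    apply monotoneOn_of_deriv_nonneg (convex_Icc 0 d)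
    · intro x hx
      exact (hder x (hsub hx)).continuousAt.continuousWithinAt
    · intro x hx
      rw [interior_Icc] at hx
      exact (hder x (hsub (Set.Ioo_subset_Icc_self hx))).differentiableAt.differentiableWithinAt
    · intro x hx
      rw [interior_Icc] at hx
      have hx' := hsub (Set.Ioo_subset_Icc_self hx)
      rw [(hder x hx').deriv]
      have hx1 : (0:ℝ) < 1 + x := by linarith [hx'.1]
      have hx2 : (0:ℝ) < 1 - x := by linarith [hx'.2]
      have e : 1/(1+x) - (-1)/(1-x) - 2 = 2*x^2/((1+x)*(1-x)) := by
        field_simp; ring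
      rw [e]; positivity
  have := hmono (Set.left_mem_Icc.2 h0) (Set.right_mem_Icc.2 h0) h0
  simp only [hf] at this
  simp only [Real.log_one, add_zero, sub_zero, mul_zero] at this
  linarith [this]

lemma omegaFn_neg_ge {d : ℝ} (h0 : 0 ≤ d) (h1 : d < 1) : omegaFn d ≤ omegaFn (-d) := by
  have := two_mul_le_log_sub h0 h1
  simp only [omegaFn]
  have : 1 + -d = 1 - d := by ring
  rw [this]
  linarith [two_mul_le_log_sub h0 h1]

lemma key_ineq {d c P : ℝ} (hd : 0 ≤ d) (hc0 : 0 ≤ c) (hc1 : c ≤ 1)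
    (hP1 : 1 ≤ P) (hP : 1 + c^2 - d^2 ≤ P) :
    omegaFn c ≤ omegaFn d + Real.log P := by
  rcases le_or_gt c d with h | h
  · have h1 := omegaFn_mono hc0 h
    have h2 : 0 ≤ Real.log P := Real.log_nonneg hP1
    linarith
  · set z := (c - d) * (c + d) with hz_def
    have hz0 : 0 ≤ z := by nlinarith
    have hz1 : (0:ℝ) < 1 + z := by linarith
    -- log(1+z) ≥ z/(1+z)
    have hlz : z/(1+z) ≤ Real.log (1+z) := by
      have := log_ge_one_sub_inv hz1
      have e : 1 - (1+z)⁻¹ = z/(1+z) := by field_simp; ring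
      linarith [e ▸ this]
    -- (c-d)c/(1+c) ≤ z/(1+z)
    have h2 : (c - d)*c/(1+c) ≤ z/(1+z) := by
      rw [div_le_div_iff₀ (by linarith) hz1, hz_def]
      have hd1 : d < 1 := lt_of_lt_of_le h hc1
      nlinarith [mul_nonneg (sub_nonneg.2 h.le) hd,
        mul_nonneg (mul_nonneg (sub_nonneg.2 h.le) (mul_nonneg hc0 hc0)) (sub_nonneg.2 hc1),
        mul_nonneg (mul_nonneg (sub_nonneg.2 h.le) hc0) hd,
        mul_nonneg (mul_nonneg (mul_nonneg (sub_nonneg.2 h.le) hc0) hd) hd]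
    -- log(1+c) - log(1+d) ≥ (c-d)/(1+c)
    have h3 : (c - d)/(1+c) ≤ Real.log (1+c) - Real.log (1+d) := by
      have hx : (0:ℝ) < (1+c)/(1+d) := by positivity
      have := log_ge_one_sub_inv hx
      rw [Real.log_div (by linarith) (by linarith)] at this
      have e : 1 - ((1+c)/(1+d))⁻¹ = (c-d)/(1+c) := by
        rw [inv_div]; field_simp; ring
      linarith [e ▸ this]
    have h4 : Real.log (1+z) ≤ Real.log P := by
      apply Real.log_le_log hz1
      nlinarith
    have e2 : (c - d) - (c - d)/(1+c) = (c - d)*c/(1+c) := by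
      field_simp; ring
    simp only [omegaFn]
    linarith [h2, h3, hlz, h4, e2]

lemma main_scalar {Y P c : ℝ} (hY : 0 < Y) (hP1 : 1 ≤ P) (hc0 : 0 ≤ c) (hc1 : c ≤ 1)
    (hkey : 1 + c^2 - (Y-1)^2 ≤ P) :
    omegaFn c ≤ (Y - 1 - Real.log Y) + Real.log P := by
  have hω : omegaFn (Y-1) = Y - 1 - Real.log Y := by
    simp only [omegaFn]
    norm_num
  rcases le_or_gt 1 Y with h | h
  · have := key_ineq (d := Y - 1) (by linarith) hc0 hc1 hP1 hkey
    linarith [hω ▸ this]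
  · have hd0 : 0 ≤ 1 - Y := by linarith
    have hd1 : 1 - Y < 1 := by linarith
    have h1 := key_ineq (d := 1 - Y) hd0 hc0 hc1 hP1 (by nlinarith)
    have h2 := omegaFn_neg_ge hd0 hd1
    have e : -(1 - Y) = Y - 1 := by ring
    rw [e] at h2
    linarith [hω ▸ h2]




-- symmetric matrix dot product swap
lemma symm_dot {n : ℕ} {M : Matrix (Fin n) (Fin n) ℝ} (hM : Mᵀ = M) (x y : Fin n → ℝ) :
    x ⬝ᵥ M.mulVec y = y ⬝ᵥ M.mulVec x := by
  rw [Matrix.dotProduct_mulVec, ← Matrix.mulVec_transpose, hM, dotProduct_comm]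

lemma posdef_transpose {n : ℕ} {M : Matrix (Fin n) (Fin n) ℝ} (hM : M.PosDef) : Mᵀ = M := by
  have := hM.1
  rwa [Matrix.IsHermitian, Matrix.conjTranspose_eq_transpose_of_trivial] at this

lemma posdef_quad_pos {n : ℕ} {M : Matrix (Fin n) (Fin n) ℝ} (hM : M.PosDef)
    {x : Fin n → ℝ} (hx : x ≠ 0) : 0 < x ⬝ᵥ M.mulVec x := by
  have := hM.dotProduct_mulVec_pos hx
  simpa using this

lemma psd_quad_nonneg {n : ℕ} {M : Matrix (Fin n) (Fin n) ℝ} (hM : M.PosSemidef)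
    (x : Fin n → ℝ) : 0 ≤ x ⬝ᵥ M.mulVec x := by
  have := hM.dotProduct_mulVec_nonneg x
  simpa using this

lemma posdef_cs {n : ℕ} {M : Matrix (Fin n) (Fin n) ℝ} (hM : M.PosDef)
    (x y : Fin n → ℝ) :
    (x ⬝ᵥ M.mulVec y)^2 ≤ (x ⬝ᵥ M.mulVec x) * (y ⬝ᵥ M.mulVec y) := by
  by_cases hy : y = 0
  · simp [hy, Matrix.mulVec_zero]
  have hsym := symm_dot (posdef_transpose hM) x y
  have hγ : 0 < y ⬝ᵥ M.mulVec y := posdef_quad_pos hM hy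
  set β := x ⬝ᵥ M.mulVec y with hβ
  have h := psd_quad_nonneg hM.posSemidef (x - (β / (y ⬝ᵥ M.mulVec y)) • y)
  rw [Matrix.mulVec_sub, Matrix.mulVec_smul, sub_dotProduct, dotProduct_sub,
    dotProduct_sub, smul_dotProduct, dotProduct_smul,
    smul_dotProduct, dotProduct_smul] at h
  simp only [smul_eq_mul, ← hβ, ← hsym] at h
  have h2 : 0 ≤ (x ⬝ᵥ M.mulVec x) - β^2 / (y ⬝ᵥ M.mulVec y) := by
    have e : (x ⬝ᵥ M.mulVec x) - β^2 / (y ⬝ᵥ M.mulVec y) =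
        x ⬝ᵥ M.mulVec x - β / (y ⬝ᵥ M.mulVec y) * β -
          (β / (y ⬝ᵥ M.mulVec y) * β -
            β / (y ⬝ᵥ M.mulVec y) * (β / (y ⬝ᵥ M.mulVec y) * (y ⬝ᵥ M.mulVec y))) := by
      field_simp
      ring
    rw [e]; exact h
  have h3 : β^2 / (y ⬝ᵥ M.mulVec y) ≤ x ⬝ᵥ M.mulVec x := by linarith
  exact (div_le_iff₀ hγ).1 h3


lemma trace_mul_vecMulVec {n : ℕ} (M : Matrix (Fin n) (Fin n) ℝ) (x y : Fin n → ℝ) :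
    (M * vecMulVec x y).trace = y ⬝ᵥ M.mulVec x := by
  simp only [Matrix.trace, Matrix.diag, Matrix.mul_apply, vecMulVec_apply, dotProduct,
    Matrix.mulVec]
  apply Finset.sum_congr rfl
  intro i _
  simp only [dotProduct, Finset.mul_sum]
  apply Finset.sum_congr rfl
  intro j _
  ring

-- helper: A⁻¹ * (G - X) trace where G - X is combination
lemma trace_G_sub_DFP {n : ℕ} (A G : Matrix (Fin n) (Fin n) ℝ) (u : Fin n → ℝ)
    (hAinv : A⁻¹.mulVec (A.mulVec u) = u)
    (h2 : A.mulVec u ⬝ᵥ A⁻¹.mulVec (G.mulVec u) = u ⬝ᵥ G.mulVec u)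
    (ha : u ⬝ᵥ A.mulVec u ≠ 0) :
    (A⁻¹ * (G - DFPupd A G u)).trace =
      (u ⬝ᵥ G.mulVec u) / (u ⬝ᵥ A.mulVec u) - 1 := by
  have e : G - DFPupd A G u =
      ((u ⬝ᵥ A.mulVec u)⁻¹) •
        (vecMulVec (A.mulVec u) (G.mulVec u) + vecMulVec (G.mulVec u) (A.mulVec u))
      - (((u ⬝ᵥ G.mulVec u) / (u ⬝ᵥ A.mulVec u) + 1) * (u ⬝ᵥ A.mulVec u)⁻¹) •
        vecMulVec (A.mulVec u) (A.mulVec u) := by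
    rw [DFPupd]; abel
  rw [e, Matrix.mul_sub, Matrix.mul_smul, Matrix.mul_smul, Matrix.trace_sub,
    Matrix.trace_smul, Matrix.trace_smul, Matrix.mul_add, Matrix.trace_add,
    trace_mul_vecMulVec, trace_mul_vecMulVec, trace_mul_vecMulVec, hAinv]
  have h1 : G.mulVec u ⬝ᵥ u = u ⬝ᵥ G.mulVec u := dotProduct_comm _ _
  have h3 : A.mulVec u ⬝ᵥ u = u ⬝ᵥ A.mulVec u := dotProduct_comm _ _
  rw [h1, h2, h3]
  simp only [smul_eq_mul]
  field_simp
  ring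

lemma trace_G_sub_BFGS {n : ℕ} (A G : Matrix (Fin n) (Fin n) ℝ) (u : Fin n → ℝ)
    (hAinv : A⁻¹.mulVec (A.mulVec u) = u)
    (hg : u ⬝ᵥ G.mulVec u ≠ 0) (ha : u ⬝ᵥ A.mulVec u ≠ 0) :
    (A⁻¹ * (G - BFGSupd A G u)).trace =
      (G.mulVec u ⬝ᵥ A⁻¹.mulVec (G.mulVec u)) / (u ⬝ᵥ G.mulVec u) - 1 := by
  have e : G - BFGSupd A G u =
      ((u ⬝ᵥ G.mulVec u)⁻¹) • vecMulVec (G.mulVec u) (G.mulVec u)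
      - ((u ⬝ᵥ A.mulVec u)⁻¹) • vecMulVec (A.mulVec u) (A.mulVec u) := by
    rw [BFGSupd]; abel
  rw [e, Matrix.mul_sub, Matrix.mul_smul, Matrix.mul_smul, Matrix.trace_sub,
    Matrix.trace_smul, Matrix.trace_smul, trace_mul_vecMulVec, trace_mul_vecMulVec, hAinv]
  have h1 : A.mulVec u ⬝ᵥ u = u ⬝ᵥ A.mulVec u := dotProduct_comm _ _
  have h4 : G.mulVec u ⬝ᵥ u = u ⬝ᵥ G.mulVec u := dotProduct_comm _ _
  rw [h1]
  rw [smul_eq_mul, smul_eq_mul]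
  field_simp
lemma det_Broyd {n : ℕ} {A G : Matrix (Fin n) (Fin n) ℝ} (hG : G.PosDef)
    {u : Fin n → ℝ} (hu : u ≠ 0)
    (ha : u ⬝ᵥ A.mulVec u ≠ 0) (hg : u ⬝ᵥ G.mulVec u ≠ 0)
    (hGinv : G⁻¹.mulVec (G.mulVec u) = u)
    (hsymA : G.mulVec u ⬝ᵥ G⁻¹.mulVec (A.mulVec u) = u ⬝ᵥ A.mulVec u)
    (hsymA2 : A.mulVec u ⬝ᵥ u = u ⬝ᵥ A.mulVec u)
    (hsymG2 : G.mulVec u ⬝ᵥ u = u ⬝ᵥ G.mulVec u)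
    (φ : ℝ) :
    (Broyd φ A G u).det = G.det *
      (φ * ((A.mulVec u ⬝ᵥ G⁻¹.mulVec (A.mulVec u)) / (u ⬝ᵥ A.mulVec u))
        + (1 - φ) * ((u ⬝ᵥ A.mulVec u) / (u ⬝ᵥ G.mulVec u))) := by
  have hGdet : IsUnit G.det := isUnit_iff_ne_zero.2 hG.det_pos.ne'
  set p := A.mulVec u with hp
  set q := G.mulVec u with hq
  set a := u ⬝ᵥ p with ha_def
  set g := u ⬝ᵥ q with hg_def
  set sA := p ⬝ᵥ G⁻¹.mulVec p with hsA_def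
  set xa : Fin n → ℝ := (-(φ * a⁻¹)) • p + (-((1 - φ) * g⁻¹)) • q with hxa
  set xb : Fin n → ℝ := (-(φ * a⁻¹)) • q
      + ((φ * (g / a + 1) + (1 - φ)) * a⁻¹) • p with hxb
  set X : Matrix (Fin n) (Fin 2) ℝ := Matrix.of (fun i k => if k = 0 then xa i else xb i)
    with hX
  set Y : Matrix (Fin 2) (Fin n) ℝ := Matrix.of (fun k j => if k = 0 then q j else p j)
    with hY
  have hBroyd : Broyd φ A G u = G + X * Y := by
    rw [Broyd, if_neg hu, DFPupd, BFGSupd]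
    ext i j
    simp only [hX, hY, hxa, hxb, hp, hq, ha_def, hg_def, Matrix.add_apply, Matrix.sub_apply,
      Matrix.smul_apply, vecMulVec_apply, Pi.add_apply, Pi.smul_apply, Pi.neg_apply,
      smul_eq_mul, Matrix.mul_apply, Fin.sum_univ_two, Matrix.of_apply, if_pos,
      Fin.one_eq_zero_iff, if_neg, ite_true, ite_false, one_ne_zero]
    field_simp
    ring
  have hfac : Broyd φ A G u = G * (1 + (G⁻¹ * X) * Y) := by
    rw [Matrix.mul_add, Matrix.mul_one, ← Matrix.mul_assoc, ← Matrix.mul_assoc,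
      Matrix.mul_nonsing_inv G hGdet, Matrix.one_mul, hBroyd]
  have hGixa : G⁻¹.mulVec xa = (-(φ * a⁻¹)) • G⁻¹.mulVec p + (-((1 - φ) * g⁻¹)) • u := by
    rw [hxa, Matrix.mulVec_add, Matrix.mulVec_smul, Matrix.mulVec_smul, hGinv]
  have hGixb : G⁻¹.mulVec xb = (-(φ * a⁻¹)) • u
      + ((φ * (g / a + 1) + (1 - φ)) * a⁻¹) • G⁻¹.mulVec p := by
    rw [hxb, Matrix.mulVec_add, Matrix.mulVec_smul, Matrix.mulVec_smul, hGinv]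
  have hGiX : G⁻¹ * X = Matrix.of (fun j k => if k = 0 then (G⁻¹.mulVec xa) j
      else (G⁻¹.mulVec xb) j) := by
    ext j k
    fin_cases k <;>
      simp [hX, Matrix.mul_apply, Matrix.mulVec, dotProduct]
  have hYGX : Y * (G⁻¹ * X) =
      !![q ⬝ᵥ G⁻¹.mulVec xa, q ⬝ᵥ G⁻¹.mulVec xb;
         p ⬝ᵥ G⁻¹.mulVec xa, p ⬝ᵥ G⁻¹.mulVec xb] := by
    rw [hGiX]
    ext k l
    fin_cases k <;> fin_cases l <;>
      simp [hY, Matrix.mul_apply, dotProduct]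
  -- scalar values of entries
  have e00 : q ⬝ᵥ G⁻¹.mulVec xa = -(φ * a⁻¹) * a + -((1 - φ) * g⁻¹) * g := by
    rw [hGixa, dotProduct_add, dotProduct_smul, dotProduct_smul, hsymA, smul_eq_mul,
      smul_eq_mul, hsymG2]
  have e01 : q ⬝ᵥ G⁻¹.mulVec xb = -(φ * a⁻¹) * g
      + (φ * (g / a + 1) + (1 - φ)) * a⁻¹ * a := by
    rw [hGixb, dotProduct_add, dotProduct_smul, dotProduct_smul, hsymA, smul_eq_mul,
      smul_eq_mul, hsymG2]
  have e10 : p ⬝ᵥ G⁻¹.mulVec xa = -(φ * a⁻¹) * sA + -((1 - φ) * g⁻¹) * a := by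
    rw [hGixa, dotProduct_add, dotProduct_smul, dotProduct_smul, smul_eq_mul, smul_eq_mul,
      hsymA2]
  have e11 : p ⬝ᵥ G⁻¹.mulVec xb = -(φ * a⁻¹) * a
      + (φ * (g / a + 1) + (1 - φ)) * a⁻¹ * sA := by
    rw [hGixb, dotProduct_add, dotProduct_smul, dotProduct_smul, smul_eq_mul, smul_eq_mul,
      hsymA2]
  rw [hfac, Matrix.det_mul, Matrix.det_one_add_mul_comm, hYGX]
  rw [Matrix.det_fin_two]
  simp only [Matrix.add_apply, Matrix.one_apply_eq, Matrix.cons_val', Matrix.cons_val_zero,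
    Matrix.cons_val_one, Matrix.head_cons, Matrix.head_fin_const, Matrix.empty_val',
    Matrix.cons_val_fin_one, Matrix.of_apply, Matrix.one_apply_ne (show (0:Fin 2) ≠ 1 by decide),
    Matrix.one_apply_ne (show (1:Fin 2) ≠ 0 by decide)]
  rw [e00, e01, e10, e11]
  field_simp
  ring
set_option maxHeartbeats 1000000 in
lemma final_scalar {ξ η φ a g sG sA τ ρ θ : ℝ}
    (hξ : 1 ≤ ξ) (hη : 1 ≤ η) (hφ0 : 0 ≤ φ) (hφ1 : φ ≤ 1)
    (ha : 0 < a) (hg : 0 < g) (hsG : 0 < sG) (hsA : 0 < sA) (hτ0 : 0 ≤ τ) (hρ0 : 0 ≤ ρ)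
    (hτ_id : τ = sG - 2*g + a) (hρ_id : ρ = g - 2*a + sA)
    (hcs1 : g^2 ≤ a*sG) (hcs2 : a^2 ≤ g*sA) (hag : a ≤ ξ*g) (hga : g ≤ η*a)
    (hτρ : τ ≤ η*ρ) (hθ : θ = Real.sqrt (τ/sG)) :
    φ * omegaFn (θ / (ξ ^ ((3:ℝ)/2) * Real.sqrt η)) + (1 - φ) * omegaFn (θ / ξ)
      ≤ (φ * (g/a - 1) + (1 - φ) * (sG/g - 1))
        + Real.log (φ * (sA/a) + (1 - φ) * (a/g)) := by
  have hξ0 : (0:ℝ) < ξ := lt_of_lt_of_le one_pos hξ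
  have hη0 : (0:ℝ) < η := lt_of_lt_of_le one_pos hη
  have hθ0 : 0 ≤ θ := by rw [hθ]; exact Real.sqrt_nonneg _
  have hθsq : θ^2 = τ/sG := by rw [hθ, Real.sq_sqrt (by positivity)]
  have hconc : φ * Real.log (sA/a) + (1-φ) * Real.log (a/g)
      ≤ Real.log (φ * (sA/a) + (1-φ) * (a/g)) := by
    have h1φ : (0:ℝ) ≤ 1 - φ := by linarith
    have hsum : φ + (1 - φ) = 1 := by ring
    have h := (strictConcaveOn_log_Ioi.concaveOn).2
      (Set.mem_Ioi.2 (show (0:ℝ) < sA/a by positivity))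
      (Set.mem_Ioi.2 (show (0:ℝ) < a/g by positivity)) hφ0 h1φ hsum
    simpa [smul_eq_mul] using h
  -- θ ≤ ξ
  have hτξ : τ ≤ ξ^2 * sG := by
    nlinarith [hcs1, mul_pos ha hg, mul_pos hg hg, sq_nonneg (ξ*g - a),
      mul_nonneg (mul_nonneg hg.le hg.le) (sub_nonneg.2 hξ),
      mul_nonneg (mul_nonneg hg.le ha.le) (sub_nonneg.2 hξ),
      mul_nonneg (sub_nonneg.2 hag) (sub_nonneg.2 hξ),
      mul_nonneg (mul_nonneg hg.le hg.le) (mul_nonneg (sub_nonneg.2 hξ) (sub_nonneg.2 hξ))]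
  have hθξ : θ ≤ ξ := by nlinarith [hθsq, hθ0, hξ0, (div_le_iff₀ hsG).2 hτξ]
  -- BFGS part
  have hB : omegaFn (θ/ξ) ≤ (sG/g - 1) + Real.log (a/g) := by
    have hY : (0:ℝ) < sG/g := by positivity
    have hP1 : (1:ℝ) ≤ a*sG/g^2 := by rw [le_div_iff₀ (by positivity)]; linarith
    have hc0 : (0:ℝ) ≤ θ/ξ := by positivity
    have hc1 : θ/ξ ≤ 1 := (div_le_one hξ0).2 hθξ
    have hgs : g ≤ ξ * sG := by
      nlinarith [hcs1, mul_le_mul_of_nonneg_right hag hsG.le, hg]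
    have hY1 : ξ⁻¹ ≤ sG/g := by
      rw [le_div_iff₀ hg]
      have h5 := mul_le_mul_of_nonneg_left hgs (show (0:ℝ) ≤ ξ⁻¹ by positivity)
      rw [← mul_assoc, inv_mul_cancel₀ hξ0.ne', one_mul] at h5
      exact h5
    have hident : a*sG/g^2 = 1 + (τ/sG)*(sG/g)^2 - (sG/g - 1)^2 := by
      rw [hτ_id]; field_simp; ring
    have hcc : (θ/ξ)^2 ≤ (τ/sG)*(sG/g)^2 := by
      rw [div_pow, hθsq]
      have h3 : (ξ⁻¹)^2 ≤ (sG/g)^2 := by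
        apply pow_le_pow_left₀ (by positivity) hY1
      calc τ/sG/ξ^2 = τ/sG * (ξ⁻¹)^2 := by rw [div_eq_mul_inv (τ/sG), inv_pow]
        _ ≤ τ/sG * (sG/g)^2 := by
            apply mul_le_mul_of_nonneg_left h3 (by positivity)
    have hkey : 1 + (θ/ξ)^2 - (sG/g - 1)^2 ≤ a*sG/g^2 := by
      rw [hident]; linarith
    have hms := main_scalar hY hP1 hc0 hc1 hkey
    have hlogP : Real.log (a*sG/g^2) = Real.log (a/g) + Real.log (sG/g) := by
      rw [← Real.log_mul (by positivity) (by positivity)]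
      congr 1; field_simp
    linarith [hms, hlogP.le, hlogP.ge]
  -- DFP part
  have hD : omegaFn (θ/(ξ ^ ((3:ℝ)/2) * Real.sqrt η)) ≤ (g/a - 1) + Real.log (sA/a) := by
    set K := ξ ^ ((3:ℝ)/2) * Real.sqrt η with hK_def
    have hK : 0 < K := by
      apply mul_pos (Real.rpow_pos_of_pos hξ0 _) (Real.sqrt_pos.2 hη0)
    have hK2 : K^2 = ξ^3 * η := by
      have e1 : (ξ ^ ((3:ℝ)/2))^(2:ℕ) = ξ^(3:ℕ) := by
        rw [← Real.rpow_natCast (ξ ^ ((3:ℝ)/2)) 2, ← Real.rpow_mul hξ0.le,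
          show ((3:ℝ)/2 * ((2:ℕ):ℝ)) = ((3:ℕ):ℝ) by norm_num, Real.rpow_natCast]
      rw [hK_def, mul_pow, Real.sq_sqrt hη0.le, e1]
    have hξK : ξ ≤ K := by
      have h1 : ξ ^ (1:ℝ) ≤ ξ ^ ((3:ℝ)/2) := Real.rpow_le_rpow_of_exponent_le hξ (by norm_num)
      have h2 : 1 ≤ Real.sqrt η := Real.one_le_sqrt.2 hη
      calc ξ = ξ^(1:ℝ) * 1 := by rw [Real.rpow_one, mul_one]
        _ ≤ ξ^((3:ℝ)/2) * Real.sqrt η :=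
            mul_le_mul h1 h2 zero_le_one (Real.rpow_nonneg hξ0.le _)
    have hY : (0:ℝ) < g/a := by positivity
    have hP1 : (1:ℝ) ≤ sA*g/a^2 := by rw [le_div_iff₀ (by positivity)]; nlinarith
    have hc0 : (0:ℝ) ≤ θ/K := by positivity
    have hc1 : θ/K ≤ 1 := (div_le_one hK).2 (le_trans hθξ hξK)
    have hident : sA*g/a^2 = 1 + (ρ*g)/a^2 - (g/a - 1)^2 := by
      rw [hρ_id]; field_simp; ring
    have ha2 : a^2 ≤ ξ^3*(sG*g) := by
      nlinarith [hcs1, hag, mul_pos hg hsG, mul_pos ha hg, hξ0,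
        mul_nonneg (mul_nonneg hξ0.le hξ0.le) (sub_nonneg.2 hcs1)]
    have hcc : (θ/K)^2 ≤ (ρ*g)/a^2 := by
      rw [div_pow, hθsq, hK2]
      rw [div_div, div_le_div_iff₀ (by positivity) (by positivity)]
      -- τ * a^2 ≤ ρ*g*(sG*(ξ^3*η))
      nlinarith [mul_le_mul hτρ ha2 (by positivity) (by positivity),
        mul_nonneg hρ0 hg.le, mul_pos hsG hg]
    have hkey : 1 + (θ/K)^2 - (g/a - 1)^2 ≤ sA*g/a^2 := by rw [hident]; linarith
    have hms := main_scalar hY hP1 hc0 hc1 hkey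
    have hlogP : Real.log (sA*g/a^2) = Real.log (sA/a) + Real.log (g/a) := by
      rw [← Real.log_mul (by positivity) (by positivity)]
      congr 1; field_simp
    linarith [hms, hlogP.le]
  have h1 := mul_le_mul_of_nonneg_left hD hφ0
  have h2 := mul_le_mul_of_nonneg_left hB (show (0:ℝ) ≤ 1-φ by linarith)
  rw [mul_add] at h1 h2
  linarith [h1, h2, hconc]

set_option maxHeartbeats 1600000 in
theorem psi_progress {n : ℕ} (A G : Matrix (Fin n) (Fin n) ℝ)
    (hA : A.PosDef) (hG : G.PosDef) (ξ η : ℝ) (hξ : 1 ≤ ξ) (hη : 1 ≤ η)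
    (hlow : (G - ξ⁻¹ • A).PosSemidef) (hup : (η • A - G).PosSemidef)
    (φ : ℝ) (hφ : φ ∈ Set.Icc (0 : ℝ) 1) (u : Fin n → ℝ) :
    psiPot A G - psiPot A (Broyd φ A G u) ≥
      φ * omegaFn (theta A G u / (ξ ^ ((3 : ℝ) / 2) * Real.sqrt η)) +
        (1 - φ) * omegaFn (theta A G u / ξ) := by
  obtain ⟨hφ0, hφ1⟩ := hφ
  by_cases hu : u = 0
  · simp only [Broyd, theta, if_pos hu, sub_self]
    simp [omegaFn]
  · -- main case
    have hξ0 : (0:ℝ) < ξ := lt_of_lt_of_le one_pos hξ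
    have hη0 : (0:ℝ) < η := lt_of_lt_of_le one_pos hη
    have hAdet : IsUnit A.det := isUnit_iff_ne_zero.2 hA.det_pos.ne'
    have hGdet : IsUnit G.det := isUnit_iff_ne_zero.2 hG.det_pos.ne'
    have hAi : A⁻¹.PosDef := hA.inv
    have hGi : G⁻¹.PosDef := hG.inv
    have hAis : (A⁻¹)ᵀ = A⁻¹ := posdef_transpose hAi
    have hGis : (G⁻¹)ᵀ = G⁻¹ := posdef_transpose hGi
    have hAip : A⁻¹.mulVec (A.mulVec u) = u := by
      rw [Matrix.mulVec_mulVec, Matrix.nonsing_inv_mul A hAdet, Matrix.one_mulVec]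
    have hGiq : G⁻¹.mulVec (G.mulVec u) = u := by
      rw [Matrix.mulVec_mulVec, Matrix.nonsing_inv_mul G hGdet, Matrix.one_mulVec]
    have ha : 0 < u ⬝ᵥ A.mulVec u := posdef_quad_pos hA hu
    have hg : 0 < u ⬝ᵥ G.mulVec u := posdef_quad_pos hG hu
    have hp0 : A.mulVec u ≠ 0 := by
      intro h; rw [h, dotProduct_zero] at ha; exact lt_irrefl 0 ha
    have hq0 : G.mulVec u ≠ 0 := by
      intro h; rw [h, dotProduct_zero] at hg; exact lt_irrefl 0 hg
    have hsG : 0 < (G.mulVec u) ⬝ᵥ A⁻¹.mulVec (G.mulVec u) := posdef_quad_pos hAi hq0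
    have hsA : 0 < (A.mulVec u) ⬝ᵥ G⁻¹.mulVec (A.mulVec u) := posdef_quad_pos hGi hp0
    -- cross-term identities
    have hsymA2 : A.mulVec u ⬝ᵥ u = u ⬝ᵥ A.mulVec u := dotProduct_comm _ _
    have hsymG2 : G.mulVec u ⬝ᵥ u = u ⬝ᵥ G.mulVec u := dotProduct_comm _ _
    have hpAiq : A.mulVec u ⬝ᵥ A⁻¹.mulVec (G.mulVec u) = u ⬝ᵥ G.mulVec u := by
      rw [symm_dot hAis, hAip, hsymG2]
    have hqAip : G.mulVec u ⬝ᵥ A⁻¹.mulVec (A.mulVec u) = u ⬝ᵥ G.mulVec u := by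
      rw [hAip, hsymG2]
    have hpAip : A.mulVec u ⬝ᵥ A⁻¹.mulVec (A.mulVec u) = u ⬝ᵥ A.mulVec u := by
      rw [hAip, hsymA2]
    have hqGip : G.mulVec u ⬝ᵥ G⁻¹.mulVec (A.mulVec u) = u ⬝ᵥ A.mulVec u := by
      rw [symm_dot hGis, hGiq, hsymA2]
    have hpGiq : A.mulVec u ⬝ᵥ G⁻¹.mulVec (G.mulVec u) = u ⬝ᵥ A.mulVec u := by
      rw [hGiq, hsymA2]
    have hqGiq : G.mulVec u ⬝ᵥ G⁻¹.mulVec (G.mulVec u) = u ⬝ᵥ G.mulVec u := by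
      rw [hGiq, hsymG2]
    -- tau and rho
    have hτ0 : 0 ≤ (G.mulVec u - A.mulVec u) ⬝ᵥ A⁻¹.mulVec (G.mulVec u - A.mulVec u) :=
      psd_quad_nonneg hAi.posSemidef _
    have hρ0 : 0 ≤ (G.mulVec u - A.mulVec u) ⬝ᵥ G⁻¹.mulVec (G.mulVec u - A.mulVec u) :=
      psd_quad_nonneg hGi.posSemidef _
    have hτ_id : (G.mulVec u - A.mulVec u) ⬝ᵥ A⁻¹.mulVec (G.mulVec u - A.mulVec u)
        = (G.mulVec u) ⬝ᵥ A⁻¹.mulVec (G.mulVec u) - 2 * (u ⬝ᵥ G.mulVec u)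
          + u ⬝ᵥ A.mulVec u := by
      rw [Matrix.mulVec_sub, sub_dotProduct, dotProduct_sub,
        dotProduct_sub, hpAiq, hqAip, hpAip]
      ring
    have hρ_id : (G.mulVec u - A.mulVec u) ⬝ᵥ G⁻¹.mulVec (G.mulVec u - A.mulVec u)
        = u ⬝ᵥ G.mulVec u - 2 * (u ⬝ᵥ A.mulVec u)
          + (A.mulVec u) ⬝ᵥ G⁻¹.mulVec (A.mulVec u) := by
      rw [Matrix.mulVec_sub, sub_dotProduct, dotProduct_sub,
        dotProduct_sub, hqGiq, hqGip, hpGiq]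
      ring
    -- Cauchy-Schwarz
    have hcs1 : (u ⬝ᵥ G.mulVec u)^2
        ≤ (u ⬝ᵥ A.mulVec u) * ((G.mulVec u) ⬝ᵥ A⁻¹.mulVec (G.mulVec u)) := by
      have h := posdef_cs hAi (A.mulVec u) (G.mulVec u)
      rwa [hpAiq, hpAip] at h
    have hcs2 : (u ⬝ᵥ A.mulVec u)^2
        ≤ (u ⬝ᵥ G.mulVec u) * ((A.mulVec u) ⬝ᵥ G⁻¹.mulVec (A.mulVec u)) := by
      have h := posdef_cs hGi (G.mulVec u) (A.mulVec u)
      rwa [hqGip, hqGiq] at h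
    -- spectral bounds
    have hag : u ⬝ᵥ A.mulVec u ≤ ξ * (u ⬝ᵥ G.mulVec u) := by
      have h := psd_quad_nonneg hlow u
      rw [Matrix.sub_mulVec, dotProduct_sub, Matrix.smul_mulVec,
        dotProduct_smul, smul_eq_mul] at h
      have h2 := mul_le_mul_of_nonneg_left (sub_nonneg.1 h) hξ0.le
      rw [← mul_assoc, mul_inv_cancel₀ hξ0.ne', one_mul] at h2
      linarith
    have hga : u ⬝ᵥ G.mulVec u ≤ η * (u ⬝ᵥ A.mulVec u) := by
      have h := psd_quad_nonneg hup u
      rw [Matrix.sub_mulVec, dotProduct_sub, Matrix.smul_mulVec,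
        dotProduct_smul, smul_eq_mul] at h
      linarith
    -- tau ≤ eta * rho
    have hτρ : (G.mulVec u - A.mulVec u) ⬝ᵥ A⁻¹.mulVec (G.mulVec u - A.mulVec u)
        ≤ η * ((G.mulVec u - A.mulVec u) ⬝ᵥ G⁻¹.mulVec (G.mulVec u - A.mulVec u)) := by
      set r := G.mulVec u - A.mulVec u with hr
      set w := A⁻¹.mulVec r with hw
      set v := G⁻¹.mulVec r with hv
      have hGv : G.mulVec v = r := by
        rw [hv, Matrix.mulVec_mulVec, Matrix.mul_nonsing_inv G hGdet, Matrix.one_mulVec]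
      have hAw : A.mulVec w = r := by
        rw [hw, Matrix.mulVec_mulVec, Matrix.mul_nonsing_inv A hAdet, Matrix.one_mulVec]
      have ht1 : v ⬝ᵥ G.mulVec w = r ⬝ᵥ w := by
        rw [symm_dot (posdef_transpose hG), hGv, dotProduct_comm]
      have ht2 : v ⬝ᵥ G.mulVec v = r ⬝ᵥ v := by
        rw [hGv, dotProduct_comm]
      have ht3 : w ⬝ᵥ G.mulVec w ≤ η * (r ⬝ᵥ w) := by
        have h := psd_quad_nonneg hup w
        rw [Matrix.sub_mulVec, dotProduct_sub, Matrix.smul_mulVec,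
          dotProduct_smul, smul_eq_mul] at h
        have e : w ⬝ᵥ A.mulVec w = r ⬝ᵥ w := by rw [hAw, dotProduct_comm]
        rw [e] at h
        linarith
    -- CS: (v ⬝ᵥ G w)² ≤ (v⬝Gv)(w⬝Gw)
      have hcs := posdef_cs hG v w
      rw [ht1, ht2] at hcs
      have hτw : r ⬝ᵥ A⁻¹.mulVec r = r ⬝ᵥ w := by rw [hw]
      have hρv : r ⬝ᵥ G⁻¹.mulVec r = r ⬝ᵥ v := by rw [hv]
      rw [hτw, hρv]
      have hτ0' : 0 ≤ r ⬝ᵥ w := by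
        have := psd_quad_nonneg hAi.posSemidef r; rwa [hτw] at this
      have hρ0' : 0 ≤ r ⬝ᵥ v := by
        have := psd_quad_nonneg hGi.posSemidef r; rwa [hρv] at this
      rcases eq_or_lt_of_le hτ0' with h | h
      · rw [← h]; positivity
      · have h4 : (r ⬝ᵥ w)^2 ≤ (r ⬝ᵥ v) * (η * (r ⬝ᵥ w)) :=
          le_trans hcs (mul_le_mul_of_nonneg_left ht3 hρ0')
        nlinarith [h4, h]
    -- theta
    have hθnum : u ⬝ᵥ ((G - A) * A⁻¹ * (G - A)).mulVec u
        = (G.mulVec u - A.mulVec u) ⬝ᵥ A⁻¹.mulVec (G.mulVec u - A.mulVec u) := by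
      have hGAs : (G - A)ᵀ = G - A := by
        rw [Matrix.transpose_sub, posdef_transpose hG, posdef_transpose hA]
      have e1 : (G - A).mulVec u = G.mulVec u - A.mulVec u := Matrix.sub_mulVec _ _ _
      rw [← Matrix.mulVec_mulVec, ← Matrix.mulVec_mulVec, symm_dot hGAs, e1]
      rw [dotProduct_comm]
    have hθden : u ⬝ᵥ (G * A⁻¹ * G).mulVec u
        = (G.mulVec u) ⬝ᵥ A⁻¹.mulVec (G.mulVec u) := by
      rw [← Matrix.mulVec_mulVec, ← Matrix.mulVec_mulVec, symm_dot (posdef_transpose hG)]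
      rw [dotProduct_comm]
    have hθ : theta A G u = Real.sqrt
        (((G.mulVec u - A.mulVec u) ⬝ᵥ A⁻¹.mulVec (G.mulVec u - A.mulVec u))
          / ((G.mulVec u) ⬝ᵥ A⁻¹.mulVec (G.mulVec u))) := by
      rw [theta, if_neg hu, hθnum, hθden]
    -- trace computation
    have hDFPtr := trace_G_sub_DFP A G u hAip hpAiq ha.ne'
    have hBFGStr := trace_G_sub_BFGS A G u hAip hg.ne' ha.ne'
    have hGB : G - (φ • DFPupd A G u + (1 - φ) • BFGSupd A G u)
        = φ • (G - DFPupd A G u) + (1 - φ) • (G - BFGSupd A G u) := by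
      rw [smul_sub, smul_sub]
      module
    have htr : (A⁻¹ * (G - Broyd φ A G u)).trace
        = φ * ((u ⬝ᵥ G.mulVec u)/(u ⬝ᵥ A.mulVec u) - 1)
          + (1 - φ) * (((G.mulVec u) ⬝ᵥ A⁻¹.mulVec (G.mulVec u))/(u ⬝ᵥ G.mulVec u) - 1) := by
      rw [Broyd, if_neg hu, hGB, Matrix.mul_add, Matrix.mul_smul, Matrix.mul_smul,
        Matrix.trace_add, Matrix.trace_smul, Matrix.trace_smul, hDFPtr, hBFGStr,
        smul_eq_mul, smul_eq_mul]
    -- determinant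
    have hdetB := det_Broyd hG hu ha.ne' hg.ne' hGiq hqGip hsymA2 hsymG2 φ
    have hF : 0 < φ * (((A.mulVec u) ⬝ᵥ G⁻¹.mulVec (A.mulVec u))/(u ⬝ᵥ A.mulVec u))
        + (1 - φ) * ((u ⬝ᵥ A.mulVec u)/(u ⬝ᵥ G.mulVec u)) := by
      rcases eq_or_lt_of_le hφ0 with h | h
      · rw [← h]; simp only [zero_mul, zero_add, sub_zero, one_mul]; positivity
      · have h1 : 0 ≤ (1 - φ) * ((u ⬝ᵥ A.mulVec u)/(u ⬝ᵥ G.mulVec u)) :=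
          mul_nonneg (by linarith) (by positivity)
        have h2 : 0 < φ * (((A.mulVec u) ⬝ᵥ G⁻¹.mulVec (A.mulVec u))/(u ⬝ᵥ A.mulVec u)) :=
          mul_pos h (by positivity)
        linarith
    -- psi difference
    have hpsi : psiPot A G - psiPot A (Broyd φ A G u)
        = (A⁻¹ * (G - Broyd φ A G u)).trace
          + Real.log (φ * (((A.mulVec u) ⬝ᵥ G⁻¹.mulVec (A.mulVec u))/(u ⬝ᵥ A.mulVec u))
            + (1 - φ) * ((u ⬝ᵥ A.mulVec u)/(u ⬝ᵥ G.mulVec u))) := by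
      have h1 : (A⁻¹ * (G - Broyd φ A G u)).trace
          = (A⁻¹ * (G - A)).trace - (A⁻¹ * (Broyd φ A G u - A)).trace := by
        rw [← Matrix.trace_sub]
        congr 1
        rw [Matrix.mul_sub, Matrix.mul_sub, Matrix.mul_sub]
        abel
      have hdetAG : (0:ℝ) < (A⁻¹ * G).det := by
        rw [Matrix.det_mul]; exact mul_pos hAi.det_pos hG.det_pos
      have hlog : Real.log (A⁻¹ * Broyd φ A G u).det
          = Real.log (A⁻¹ * G).det
            + Real.log (φ * (((A.mulVec u) ⬝ᵥ G⁻¹.mulVec (A.mulVec u))/(u ⬝ᵥ A.mulVec u))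
              + (1 - φ) * ((u ⬝ᵥ A.mulVec u)/(u ⬝ᵥ G.mulVec u))) := by
        rw [Matrix.det_mul, hdetB, ← mul_assoc, Real.log_mul (by
          rw [← Matrix.det_mul] at *; exact hdetAG.ne') hF.ne', Matrix.det_mul]
      simp only [psiPot]
      linarith [h1, hlog]
    rw [ge_iff_le, hpsi, htr]
    exact final_scalar hξ hη hφ0 hφ1 ha hg hsG hsA hτ0 hρ0 hτ_id hρ_id hcs1 hcs2 hag hga hτρ hθ
end
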